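/- Let n ≥ 1, z ∈ ℂ∖ℝ, and let π₁, π₂ be the Hermitian projections of ℂⁿ onto subspaces V₁, V₂ respectively. Suppose V₂¹ := V₂ ∩ V₁^⊥ ≠ {0}. Let τ₂ be the Hermitian projection onto V₂ ∩ (V₂¹)^⊥ and τ₁ the Hermitian projection onto V₁ + V₂¹ (an orthogonal direct sum, since V₂¹ ⊆ V₁^⊥). Then range τ₂ ∩ (range τ₁)^⊥ = {0}, and for every λ ∈ ℂ∖{z}: g_{z,π₂}(λ)·g_{z,π₁}(λ) = g_{z,τ₂}(λ)·g_{z,τ₁}(λ). -/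

import Mathlib

open Matrix Complex Filter

noncomputable section

/-- A Hermitian projection of ℂⁿ: a matrix with π* = π and π² = π. -/
def IsHermitianProj {n : ℕ} (π : Matrix (Fin n) (Fin n) ℂ) : Prop :=
  πᴴ = π ∧ π * π = π

/-- The simple element g_{z,π}(λ) = I + ((z - conj z)/(λ - z))·(I - π). -/
def simpleElt {n : ℕ} (z : ℂ) (π : Matrix (Fin n) (Fin n) ℂ) (lam : ℂ) :
    Matrix (Fin n) (Fin n) ℂ :=
  1 + ((z - (starRingEnd ℂ) z) / (lam - z)) • (1 - π)

/-- The range of the linear map ℂⁿ → ℂⁿ defined by a matrix. -/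
def mrange {n m : ℕ} (A : Matrix (Fin n) (Fin m) ℂ) :
    Submodule ℂ (EuclideanSpace ℂ (Fin n)) :=
  LinearMap.range (Matrix.toEuclideanLin A)

lemma tel_mul {n : ℕ} (A B : Matrix (Fin n) (Fin n) ℂ) :
    Matrix.toEuclideanLin (A*B) = (Matrix.toEuclideanLin A).comp (Matrix.toEuclideanLin B) := by
  apply LinearMap.ext; intro x
  simp [Matrix.toEuclideanLin_apply, mulVec_mulVec]

lemma herm_fix {n : ℕ} {π : Matrix (Fin n) (Fin n) ℂ} (h : IsHermitianProj π)
    {x : EuclideanSpace ℂ (Fin n)} (hx : x ∈ mrange π) :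
    Matrix.toEuclideanLin π x = x := by
  obtain ⟨y, rfl⟩ := hx
  have h2 := congrArg (fun M => Matrix.toEuclideanLin M y) h.2
  simpa [tel_mul] using h2

lemma herm_kill {n : ℕ} {π : Matrix (Fin n) (Fin n) ℂ} (h : IsHermitianProj π)
    {x : EuclideanSpace ℂ (Fin n)} (hx : x ∈ (mrange π)ᗮ) :
    Matrix.toEuclideanLin π x = 0 := by
  set f := Matrix.toEuclideanLin π with hf
  have hsa : LinearMap.adjoint f = f := by
    rw [hf, ← Matrix.toEuclideanLin_conjTranspose_eq_adjoint, h.1]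
  have hmem : f x ∈ mrange π := ⟨x, rfl⟩
  have h0 : (inner ℂ (f x) (f x) : ℂ) = 0 := by
    calc (inner ℂ (f x) (f x) : ℂ) = inner ℂ (LinearMap.adjoint f (f x)) x :=
        (LinearMap.adjoint_inner_left f x (f x)).symm
    _ = inner ℂ (f (f x)) x := by rw [hsa]
    _ = inner ℂ (f x) x := by rw [herm_fix h hmem]
    _ = 0 := hx (f x) hmem
  exact inner_self_eq_zero.mp h0

theorem statement4 {n : ℕ} (hn : 1 ≤ n) (z : ℂ) (hz : z.im ≠ 0)
    (V₁ V₂ : Submodule ℂ (EuclideanSpace ℂ (Fin n)))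
    (π₁ π₂ τ₁ τ₂ : Matrix (Fin n) (Fin n) ℂ)
    (hπ₁ : IsHermitianProj π₁) (hπ₂ : IsHermitianProj π₂)
    (hτ₁ : IsHermitianProj τ₁) (hτ₂ : IsHermitianProj τ₂)
    (hrπ₁ : mrange π₁ = V₁) (hrπ₂ : mrange π₂ = V₂)
    (hne : V₂ ⊓ V₁ᗮ ≠ ⊥)
    (hrτ₂ : mrange τ₂ = V₂ ⊓ (V₂ ⊓ V₁ᗮ)ᗮ)
    (hrτ₁ : mrange τ₁ = V₁ ⊔ (V₂ ⊓ V₁ᗮ)) :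
    mrange τ₂ ⊓ (mrange τ₁)ᗮ = ⊥ ∧
    ∀ lam : ℂ, lam ≠ z →
      simpleElt z π₂ lam * simpleElt z π₁ lam
        = simpleElt z τ₂ lam * simpleElt z τ₁ lam := by
  set W : Submodule ℂ (EuclideanSpace ℂ (Fin n)) := V₂ ⊓ V₁ᗮ with hWdef
  have hWV₂ : W ≤ V₂ := inf_le_left
  have hWV₁o : W ≤ V₁ᗮ := inf_le_right
  have hV₁Wo : V₁ ≤ Wᗮ :=
    le_trans (Submodule.le_orthogonal_orthogonal V₁) (Submodule.orthogonal_le hWV₁o)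
  have hV₂oWo : V₂ᗮ ≤ Wᗮ := Submodule.orthogonal_le hWV₂
  constructor
  · rw [hrτ₂, hrτ₁]
    rw [eq_bot_iff]
    intro x hx
    obtain ⟨⟨hxV₂, hxWo⟩, hxsupo⟩ := hx
    have hxW : x ∈ W := ⟨hxV₂, by
      intro u hu
      have := hxsupo u (Submodule.mem_sup_left hu)
      simpa using this⟩
    have : (inner ℂ x x : ℂ) = 0 := hxWo x hxW
    simpa using inner_self_eq_zero.mp this
  · -- the orthogonal projection onto W as a linear map and as a matrix
    set P : EuclideanSpace ℂ (Fin n) →ₗ[ℂ] EuclideanSpace ℂ (Fin n) :=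
      W.subtype.comp (W.orthogonalProjectionOnto : EuclideanSpace ℂ (Fin n) →ₗ[ℂ] W) with hPdef
    set p : Matrix (Fin n) (Fin n) ℂ := Matrix.toEuclideanLin.symm P with hpdef
    have htp : Matrix.toEuclideanLin p = P := by
      rw [hpdef]
      exact LinearEquiv.apply_symm_apply Matrix.toEuclideanLin P
    have hPmem : ∀ x, P x ∈ W := fun x => (W.orthogonalProjectionOnto x).2
    have hPfix : ∀ x ∈ W, P x = x := by
      intro x hx
      show (W.orthogonalProjectionOnto x : EuclideanSpace ℂ (Fin n)) = x
      exact W.starProjection_eq_self_iff.mpr hx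
    have hPkill : ∀ x ∈ Wᗮ, P x = 0 := by
      intro x hx
      show (W.orthogonalProjectionOnto x : EuclideanSpace ℂ (Fin n)) = 0
      rw [Submodule.orthogonalProjectionOnto_apply_of_mem_orthogonal hx]
      rfl
    -- τ₁ = π₁ + p
    have heq1 : τ₁ = π₁ + p := by
      apply Matrix.toEuclideanLin.injective
      rw [map_add, htp]
      apply LinearMap.ext; intro x
      obtain ⟨a, ha, b, hb, rfl⟩ := (V₁ ⊔ W).exists_add_mem_mem_orthogonal x
      obtain ⟨u, hu, w, hw, rfl⟩ := Submodule.mem_sup.mp ha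
      have hbV₁o : b ∈ V₁ᗮ := Submodule.orthogonal_le le_sup_left hb
      have hbWo : b ∈ Wᗮ := Submodule.orthogonal_le le_sup_right hb
      have h1 : Matrix.toEuclideanLin τ₁ (u + w + b) = u + w := by
        rw [map_add]
        rw [herm_fix hτ₁ (by rw [hrτ₁]; exact ha), herm_kill hτ₁ (by rw [hrτ₁]; exact hb)]
        simp
      have h2 : Matrix.toEuclideanLin π₁ (u + w + b) = u := by
        rw [map_add, map_add]
        rw [herm_fix hπ₁ (by rw [hrπ₁]; exact hu),
          herm_kill hπ₁ (by rw [hrπ₁]; exact hWV₁o hw),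
          herm_kill hπ₁ (by rw [hrπ₁]; exact hbV₁o)]
        simp
      have h3 : P (u + w + b) = w := by
        rw [map_add, map_add, hPfix w hw, hPkill u (hV₁Wo hu), hPkill b hbWo]
        simp
      simp only [LinearMap.add_apply, h1, h2, h3]
    -- τ₂ = π₂ - p
    have heq2 : τ₂ = π₂ - p := by
      apply Matrix.toEuclideanLin.injective
      rw [map_sub, htp]
      apply LinearMap.ext; intro x
      obtain ⟨a, ha, b, hb, rfl⟩ := V₂.exists_add_mem_mem_orthogonal x
      set w := P a with hwdef
      set c := a - w with hcdef
      have hwW : w ∈ W := hPmem a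
      have hcWo : c ∈ Wᗮ := by
        rw [hcdef, hwdef, hPdef]
        exact W.sub_starProjection_mem_orthogonal a
      have hcV₂ : c ∈ V₂ := V₂.sub_mem ha (hWV₂ hwW)
      have hacw : a = c + w := by rw [hcdef]; abel
      have hbWo : b ∈ Wᗮ := hV₂oWo hb
      have h1 : Matrix.toEuclideanLin τ₂ (a + b) = c := by
        rw [hacw, map_add, map_add]
        rw [herm_fix hτ₂ (by rw [hrτ₂]; exact ⟨hcV₂, hcWo⟩),
          herm_kill hτ₂ (by
            rw [hrτ₂]
            exact Submodule.orthogonal_le inf_le_right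
              (Submodule.le_orthogonal_orthogonal W hwW)),
          herm_kill hτ₂ (by rw [hrτ₂]; exact Submodule.orthogonal_le inf_le_left hb)]
        simp
      have h2 : Matrix.toEuclideanLin π₂ (a + b) = c + w := by
        rw [hacw, map_add, map_add]
        rw [herm_fix hπ₂ (by rw [hrπ₂]; exact hcV₂),
          herm_fix hπ₂ (by rw [hrπ₂]; exact hWV₂ hwW),
          herm_kill hπ₂ (by rw [hrπ₂]; exact hb)]
        simp
      have h3 : P (a + b) = w := by
        rw [hacw, map_add, map_add, hPfix w hwW, hPkill c hcWo, hPkill b hbWo]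
        simp
      simp only [LinearMap.sub_apply, h1, h2, h3]
      abel
    -- algebraic identities
    have hπ₂p : π₂ * p = p := by
      apply Matrix.toEuclideanLin.injective
      rw [tel_mul, htp]
      apply LinearMap.ext; intro x
      exact herm_fix hπ₂ (by rw [hrπ₂]; exact hWV₂ (hPmem x))
    have hpπ₁ : p * π₁ = 0 := by
      apply Matrix.toEuclideanLin.injective
      rw [tel_mul, htp]
      apply LinearMap.ext; intro x
      have : Matrix.toEuclideanLin π₁ x ∈ V₁ := by rw [← hrπ₁]; exact ⟨x, rfl⟩
      simpa using hPkill _ (hV₁Wo this)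
    have hpp : p * p = p := by
      apply Matrix.toEuclideanLin.injective
      rw [tel_mul, htp]
      apply LinearMap.ext; intro x
      exact hPfix _ (hPmem x)
    have hsum : (1 - τ₂) + (1 - τ₁) = (1 - π₂) + (1 - π₁) := by
      rw [heq1, heq2]; abel
    have hprod : (1 - τ₂) * (1 - τ₁) = (1 - π₂) * (1 - π₁) := by
      have e1 : (1 - τ₂) * (1 - τ₁) = 1 - τ₁ - τ₂ + τ₂ * τ₁ := by noncomm_ring
      have e2 : (1 - π₂) * (1 - π₁) = 1 - π₁ - π₂ + π₂ * π₁ := by noncomm_ring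
      have e3 : τ₂ * τ₁ = π₂ * π₁ := by
        rw [heq1, heq2, sub_mul, mul_add, mul_add, hπ₂p, hpπ₁, hpp]
        abel
      rw [e1, e2, e3, heq1, heq2]
      abel
    intro lam hlam
    set cc : ℂ := (z - (starRingEnd ℂ) z) / (lam - z) with hcc
    have expand : ∀ A B : Matrix (Fin n) (Fin n) ℂ,
        (1 + cc • A) * (1 + cc • B) = 1 + cc • (A + B) + (cc * cc) • (A * B) := by
      intro A B
      simp only [add_mul, mul_add, one_mul, mul_one, smul_add, smul_smul,
        smul_mul_assoc, mul_smul_comm]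
      abel
    simp only [simpleElt, ← hcc, expand, hsum, hprod]
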